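/- Let V₀, V₁ be independent standard normal random variables and δ ∈ (−1,1). Then Y = √(1−δ²)·V₀ + δ·|V₁| has density f(y) = 2·φ(y)·Φ(αy) with α = δ/√(1−δ²). -/

import Mathlib

open Real MeasureTheory ProbabilityTheory

/-- Standard normal density. -/
noncomputable def stdNormalPDF (x : ℝ) : ℝ :=
  (Real.sqrt (2 * Real.pi))⁻¹ * Real.exp (-x ^ 2 / 2)

/-- Standard normal distribution function. -/
noncomputable def stdNormalCDF (x : ℝ) : ℝ :=
  ∫ t in Set.Iic x, stdNormalPDF t

open Set
open scoped ENNReal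

lemma stdNormalPDF_nonneg (x : ℝ) : 0 ≤ stdNormalPDF x := by
  unfold stdNormalPDF; positivity

lemma measurable_stdNormalPDF : Measurable stdNormalPDF := by
  unfold stdNormalPDF; fun_prop

lemma integrable_stdNormalPDF : Integrable stdNormalPDF := by
  unfold stdNormalPDF
  apply Integrable.const_mul
  have := integrable_exp_neg_mul_sq (b := (1:ℝ)/2) (by norm_num)
  convert this using 2 with x
  ring_nf

lemma stdNormalPDF_neg (x : ℝ) : stdNormalPDF (-x) = stdNormalPDF x := by
  unfold stdNormalPDF; rw [neg_pow]; ring_nf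

lemma lintegral_Iic_stdNormalPDF (c : ℝ) :
    ∫⁻ t in Set.Iic c, ENNReal.ofReal (stdNormalPDF t) = ENNReal.ofReal (stdNormalCDF c) := by
  rw [stdNormalCDF, ofReal_integral_eq_lintegral_ofReal
    (integrable_stdNormalPDF.restrict) (Filter.Eventually.of_forall fun x => stdNormalPDF_nonneg x)]

-- symmetry: ∫ over Ioi (-c) = CDF c
lemma lintegral_Ioi_stdNormalPDF (c : ℝ) :
    ∫⁻ t in Set.Ioi (-c), ENNReal.ofReal (stdNormalPDF t) = ENNReal.ofReal (stdNormalCDF c) := by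
  have hmp : MeasurePreserving (fun t : ℝ => -t) volume volume := Measure.measurePreserving_neg _
  have h1 : ∫⁻ t in Set.Ioi (-c), ENNReal.ofReal (stdNormalPDF t)
      = ∫⁻ t in Set.Iio c, ENNReal.ofReal (stdNormalPDF (-t)) := by
    rw [← hmp.setLIntegral_comp_preimage_emb (MeasurableEquiv.neg ℝ).measurableEmbedding]
    congr 1
    ext x; simp [Set.mem_preimage, lt_neg]
  rw [h1, Measure.restrict_congr_set Iio_ae_eq_Iic]
  simp_rw [stdNormalPDF_neg]
  exact lintegral_Iic_stdNormalPDF c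

lemma stdNormalCDF_nonneg (c : ℝ) : 0 ≤ stdNormalCDF c :=
  integral_nonneg fun x => stdNormalPDF_nonneg x

lemma lintegral_affine {a : ℝ} (ha : a ≠ 0) (c : ℝ) (f : ℝ → ℝ≥0∞) (hf : Measurable f) :
    ∫⁻ x, f (a * x + c) = ENNReal.ofReal |a|⁻¹ * ∫⁻ u, f u := by
  have h1 : Measure.map (fun x : ℝ => a * x + c) volume
      = ENNReal.ofReal |a⁻¹| • volume := by
    have h : (fun x : ℝ => a * x + c) = (fun x => x + c) ∘ (fun x => a * x) := rfl
    rw [h, ← Measure.map_map (measurable_add_const c) (measurable_const_mul a),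
      Real.map_volume_mul_left ha, Measure.map_smul, map_add_right_eq_self]
  have h2 := lintegral_map hf (by fun_prop : Measurable (fun x : ℝ => a * x + c))
    (μ := (volume : Measure ℝ)) (f := f)
  rw [← h2, h1, lintegral_smul_measure, abs_inv, smul_eq_mul]

lemma lintegral_affine' {a : ℝ} (ha : a ≠ 0) (c : ℝ) (f : ℝ → ℝ≥0∞) (hf : Measurable f) :
    ∫⁻ u, f u = ENNReal.ofReal |a| * ∫⁻ x, f (a * x + c) := by
  rw [lintegral_affine ha c f hf, ← mul_assoc, ← ENNReal.ofReal_mul (abs_nonneg a)]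
  rw [mul_inv_cancel₀ (abs_ne_zero.2 ha)]
  simp

-- key pointwise exponent identity
lemma pdf_factor {a b : ℝ} (ha : a ≠ 0) (hab : a ^ 2 + b ^ 2 = 1) (u y : ℝ) :
    stdNormalPDF ((u - b * y) / a) * stdNormalPDF y
      = stdNormalPDF u * ((Real.sqrt (2 * Real.pi))⁻¹ * Real.exp (-((y - b * u) / a) ^ 2 / 2)) := by
  unfold stdNormalPDF
  rw [show ∀ p q r s : ℝ, (p * q) * (r * s) = (p * r) * (q * s) by intros; ring,
    show ((Real.sqrt (2*Real.pi))⁻¹ * Real.exp (-u^2/2)) * ((Real.sqrt (2*Real.pi))⁻¹ *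
      Real.exp (-((y - b*u)/a)^2/2)) = ((Real.sqrt (2*Real.pi))⁻¹ * (Real.sqrt (2*Real.pi))⁻¹) *
      (Real.exp (-u^2/2) * Real.exp (-((y - b*u)/a)^2/2)) by ring,
    ← Real.exp_add, ← Real.exp_add]
  congr 1
  congr 1
  field_simp
  linear_combination (u ^ 2 - y ^ 2) * hab

-- the key inner integral
lemma key_integral {a b : ℝ} (ha : 0 < a) (hab : a ^ 2 + b ^ 2 = 1) (u : ℝ) :
    ∫⁻ y in Set.Ioi (0:ℝ), ENNReal.ofReal (stdNormalPDF ((u - b * y) / a) * stdNormalPDF y)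
      = ENNReal.ofReal (a * stdNormalPDF u * stdNormalCDF (b / a * u)) := by
  have ha' : a ≠ 0 := ne_of_gt ha
  simp_rw [pdf_factor ha' hab u]
  have hmeas : Measurable fun y : ℝ =>
      ENNReal.ofReal ((Real.sqrt (2 * Real.pi))⁻¹ * Real.exp (-((y - b * u) / a) ^ 2 / 2)) := by
    fun_prop
  rw [show (fun y => ENNReal.ofReal (stdNormalPDF u * ((Real.sqrt (2 * Real.pi))⁻¹
      * Real.exp (-((y - b * u) / a) ^ 2 / 2)))) = fun y => ENNReal.ofReal (stdNormalPDF u)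
      * ENNReal.ofReal ((Real.sqrt (2 * Real.pi))⁻¹ * Real.exp (-((y - b * u) / a) ^ 2 / 2)) by
      ext y; rw [ENNReal.ofReal_mul (stdNormalPDF_nonneg u)],
    lintegral_const_mul' _ _ ENNReal.ofReal_ne_top]
  have hsub : ∫⁻ y in Set.Ioi (0:ℝ),
      ENNReal.ofReal ((Real.sqrt (2 * Real.pi))⁻¹ * Real.exp (-((y - b * u) / a) ^ 2 / 2))
      = ENNReal.ofReal a * ENNReal.ofReal (stdNormalCDF (b / a * u)) := by
    rw [← lintegral_indicator measurableSet_Ioi]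
    rw [lintegral_affine' ha' (b * u) _ (hmeas.indicator measurableSet_Ioi)]
    have : ∀ x : ℝ, (Set.Ioi (0:ℝ)).indicator (fun y =>
        ENNReal.ofReal ((Real.sqrt (2 * Real.pi))⁻¹ * Real.exp (-((y - b * u) / a) ^ 2 / 2)))
        (a * x + b * u)
        = (Set.Ioi (-(b / a * u))).indicator (fun t => ENNReal.ofReal (stdNormalPDF t)) x := by
      intro x
      rw [Set.indicator_apply, Set.indicator_apply]
      have hmem : a * x + b * u ∈ Set.Ioi (0:ℝ) ↔ x ∈ Set.Ioi (-(b / a * u)) := by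
        simp only [Set.mem_Ioi]
        rw [show -(b / a * u) = -(b * u) / a by ring, div_lt_iff₀ ha]
        constructor
        · intro h; nlinarith
        · intro h; nlinarith
      rw [if_congr hmem rfl rfl]
      congr 1
      unfold stdNormalPDF
      rw [add_sub_cancel_right, mul_comm a x, mul_div_cancel_right₀ _ ha']
    simp_rw [this]
    rw [lintegral_indicator measurableSet_Ioi, lintegral_Ioi_stdNormalPDF,
      abs_of_pos ha]
  rw [hsub, ENNReal.ofReal_mul (mul_nonneg (le_of_lt ha) (stdNormalPDF_nonneg u)), ENNReal.ofReal_mul (le_of_lt ha)]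
  ring

lemma lintegral_abs_half (h : ℝ → ℝ≥0∞) (hh : Measurable h) :
    ∫⁻ y, ENNReal.ofReal (stdNormalPDF y) * h |y|
      = 2 * ∫⁻ y in Set.Ioi (0:ℝ), ENNReal.ofReal (stdNormalPDF y) * h y := by
  have hmF : Measurable fun y : ℝ => ENNReal.ofReal (stdNormalPDF y) * h |y| := by
    exact ((measurable_stdNormalPDF.ennreal_ofReal).mul (hh.comp measurable_abs))
  rw [← lintegral_add_compl (fun y => ENNReal.ofReal (stdNormalPDF y) * h |y|)
    (measurableSet_Ioi (a := (0:ℝ)))]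
  have h1 : ∫⁻ y in Set.Ioi (0:ℝ), ENNReal.ofReal (stdNormalPDF y) * h |y|
      = ∫⁻ y in Set.Ioi (0:ℝ), ENNReal.ofReal (stdNormalPDF y) * h y := by
    apply setLIntegral_congr_fun measurableSet_Ioi
    exact fun y hy => by beta_reduce; rw [abs_of_pos hy]
  have h2 : ∫⁻ y in (Set.Ioi (0:ℝ))ᶜ, ENNReal.ofReal (stdNormalPDF y) * h |y|
      = ∫⁻ y in Set.Ioi (0:ℝ), ENNReal.ofReal (stdNormalPDF y) * h y := by
    have hmp : MeasurePreserving (fun t : ℝ => -t) volume volume :=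
      Measure.measurePreserving_neg _
    have key := hmp.setLIntegral_comp_preimage_emb
      (MeasurableEquiv.neg ℝ).measurableEmbedding
      (fun y => ENNReal.ofReal (stdNormalPDF y) * h |y|) ((Set.Ioi (0:ℝ))ᶜ)
    rw [← key]
    have hpre : (fun t : ℝ => -t) ⁻¹' (Set.Ioi (0:ℝ))ᶜ = Set.Ici (0:ℝ) := by
      ext x; simp [le_neg]
    rw [hpre, Measure.restrict_congr_set Ioi_ae_eq_Ici.symm]
    apply setLIntegral_congr_fun measurableSet_Ioi
    refine fun y hy => ?_
    beta_reduce
    rw [stdNormalPDF_neg, abs_neg, abs_of_pos hy]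
  rw [h1, h2, two_mul]

noncomputable def G' (x : ℝ) : ℝ≥0∞ := ENNReal.ofReal (stdNormalPDF x)

lemma G'_def : G' = fun x => ENNReal.ofReal (stdNormalPDF x) := rfl

lemma G'_ne_top (x : ℝ) : G' x ≠ ⊤ := ENNReal.ofReal_ne_top

lemma measurable_G' : Measurable G' := measurable_stdNormalPDF.ennreal_ofReal

lemma lintegral_abs_half' (h : ℝ → ℝ≥0∞) (hh : Measurable h) :
    ∫⁻ y, G' y * h |y| = 2 * ∫⁻ y in Set.Ioi (0:ℝ), G' y * h y := by
  simp only [G'_def]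
  exact lintegral_abs_half h hh

lemma key_integral' {a b : ℝ} (ha : 0 < a) (hab : a ^ 2 + b ^ 2 = 1) (u : ℝ) :
    ∫⁻ y in Set.Ioi (0:ℝ), G' ((u - b * y) / a) * G' y
      = ENNReal.ofReal (a * stdNormalPDF u * stdNormalCDF (b / a * u)) := by
  rw [← key_integral ha hab u]
  refine lintegral_congr fun y => ?_
  rw [G'_def, ENNReal.ofReal_mul (stdNormalPDF_nonneg _)]

lemma gaussianReal_eq_stdNormal : gaussianReal 0 1 = volume.withDensity G' := by
  rw [gaussianReal_of_var_ne_zero 0 one_ne_zero]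
  congr 1
  ext x
  rw [gaussianPDF_def, G'_def]
  unfold gaussianPDFReal stdNormalPDF
  norm_num

/-- If `V₀, V₁` are independent standard normals and `δ ∈ (-1,1)`, then
`Y = √(1-δ²) V₀ + δ |V₁|` has density `y ↦ 2 φ(y) Φ(αy)` with
`α = δ/√(1-δ²)`. -/
theorem convolution_representation_skew_normal (δ : ℝ) (hδ : δ ∈ Set.Ioo (-1 : ℝ) 1) :
    Measure.map (fun p : ℝ × ℝ => Real.sqrt (1 - δ ^ 2) * p.1 + δ * |p.2|)
      ((gaussianReal 0 1).prod (gaussianReal 0 1)) =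
    (volume : Measure ℝ).withDensity
      (fun y => ENNReal.ofReal
        (2 * stdNormalPDF y * stdNormalCDF (δ / Real.sqrt (1 - δ ^ 2) * y))) := by
  obtain ⟨hδ1, hδ2⟩ := hδ
  have hδsq : δ ^ 2 < 1 := by nlinarith
  set a : ℝ := Real.sqrt (1 - δ ^ 2) with ha_def
  have ha : 0 < a := Real.sqrt_pos.2 (by linarith)
  have ha' : a ≠ 0 := ne_of_gt ha
  have hasq : a ^ 2 = 1 - δ ^ 2 := Real.sq_sqrt (by linarith)
  have hab : a ^ 2 + δ ^ 2 = 1 := by rw [hasq]; ring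
  have hT : Measurable (fun p : ℝ × ℝ => a * p.1 + δ * |p.2|) := by fun_prop
  refine Measure.ext fun s hs => ?_
  have hχm : Measurable (Set.indicator s (1 : ℝ → ℝ≥0∞)) := measurable_one.indicator hs
  set χ : ℝ → ℝ≥0∞ := Set.indicator s 1 with hχ_def
  set Q1 : ℝ × ℝ → ℝ≥0∞ := fun p => G' p.1 * G' p.2 * χ (a * p.1 + δ * |p.2|) with hQ1_def
  set Q2 : ℝ × ℝ → ℝ≥0∞ :=
    fun p => if 0 < p.2 then G' p.1 * G' p.2 * χ (a * p.1 + δ * p.2) else 0 with hQ2_def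
  set Q3 : ℝ × ℝ → ℝ≥0∞ :=
    fun p => if 0 < p.1 then χ p.2 * (G' ((p.2 - δ * p.1) / a) * G' p.1) else 0 with hQ3_def
  have hQ1m : Measurable Q1 := by
    apply ((measurable_G'.comp measurable_fst).mul (measurable_G'.comp measurable_snd)).mul
    exact hχm.comp (by fun_prop)
  have hQ2m : Measurable Q2 := by
    refine Measurable.ite (measurable_snd measurableSet_Ioi) ?_ measurable_const
    exact ((measurable_G'.comp measurable_fst).mul (measurable_G'.comp measurable_snd)).mul
      (hχm.comp (by fun_prop))
  have hQ3m : Measurable Q3 := by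
    refine Measurable.ite (measurable_fst measurableSet_Ioi) ?_ measurable_const
    exact (hχm.comp measurable_snd).mul
      (((measurable_G'.comp (by fun_prop))).mul (measurable_G'.comp measurable_fst))
  rw [Measure.map_apply hT hs, withDensity_apply _ hs, gaussianReal_eq_stdNormal]
  have step0 : ((volume.withDensity G').prod (volume.withDensity G'))
      ((fun p : ℝ × ℝ => a * p.1 + δ * |p.2|) ⁻¹' s) = ∫⁻ p, Q1 p ∂(volume.prod volume) := by
    set T : ℝ × ℝ → ℝ := fun p => a * p.1 + δ * |p.2| with hT_def
    have hind : Measurable (Set.indicator (T ⁻¹' s) (1 : ℝ × ℝ → ℝ≥0∞)) :=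
      measurable_one.indicator (hT hs)
    rw [← lintegral_indicator_one (hT hs),
      lintegral_prod _ hind.aemeasurable,
      lintegral_prod _ hQ1m.aemeasurable]
    have inner_eq : ∀ x : ℝ, ∫⁻ y, Set.indicator (T ⁻¹' s) 1 (x, y) ∂(volume.withDensity G')
        = ∫⁻ y, G' y * Set.indicator (T ⁻¹' s) 1 (x, y) := fun x =>
      lintegral_withDensity_eq_lintegral_mul volume measurable_G'
        (hind.comp measurable_prodMk_left)
    simp_rw [inner_eq]
    have hH : Measurable fun x : ℝ => ∫⁻ y, G' y * Set.indicator (T ⁻¹' s) 1 (x, y) := by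
      have hm : Measurable fun p : ℝ × ℝ => G' p.2 * Set.indicator (T ⁻¹' s) 1 p := by
        exact (measurable_G'.comp measurable_snd).mul hind
      exact hm.lintegral_prod_right'
    rw [lintegral_withDensity_eq_lintegral_mul volume measurable_G' hH]
    refine lintegral_congr fun x => ?_
    simp only [Pi.mul_apply]
    rw [← lintegral_const_mul' _ _ (G'_ne_top x)]
    refine lintegral_congr fun y => ?_
    have : Set.indicator (T ⁻¹' s) (1 : ℝ × ℝ → ℝ≥0∞) (x, y) = χ (T (x, y)) := by
      by_cases hmem : T (x, y) ∈ s <;>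
        simp [Set.indicator_apply, Set.mem_preimage, hmem, hχ_def]
    rw [this, hQ1_def]
    simp only [hT_def]
    ring
  have step1 : ∫⁻ p, Q1 p ∂(volume.prod volume) = 2 * ∫⁻ p, Q2 p ∂(volume.prod volume) := by
    rw [lintegral_prod _ hQ1m.aemeasurable,
      lintegral_prod _ hQ2m.aemeasurable,
      ← lintegral_const_mul' 2 _ (by norm_num)]
    refine lintegral_congr fun x => ?_
    have hh : Measurable fun t : ℝ => χ (a * x + δ * t) := hχm.comp (by fun_prop)
    have e1 : (fun y => Q1 (x, y)) = fun y => G' x * (G' y * χ (a * x + δ * |y|)) := by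
      ext y; rw [hQ1_def]; ring
    rw [e1, lintegral_const_mul' _ _ (G'_ne_top x),
      lintegral_abs_half' _ hh, ← lintegral_indicator measurableSet_Ioi]
    calc G' x * (2 * ∫⁻ y, (Set.Ioi 0).indicator (fun y => G' y * χ (a * x + δ * y)) y)
        = ∫⁻ y, G' x * (2 * (Set.Ioi 0).indicator (fun y => G' y * χ (a * x + δ * y)) y) := by
          rw [lintegral_const_mul' (G' x) _ (G'_ne_top x),
            lintegral_const_mul' 2 _ (by norm_num)]
      _ = ∫⁻ y, 2 * Q2 (x, y) := lintegral_congr fun y => by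
          by_cases h0 : 0 < y
          · simp only [hQ2_def, Set.indicator_apply, Set.mem_Ioi, h0, if_true]
            ring
          · simp [hQ2_def, Set.indicator_apply, h0]
      _ = 2 * ∫⁻ y, Q2 (x, y) := lintegral_const_mul' 2 _ (by norm_num)
  have step2 : ∫⁻ p, Q2 p ∂(volume.prod volume)
      = ENNReal.ofReal a⁻¹ * ∫⁻ p, Q3 p ∂(volume.prod volume) := by
    rw [lintegral_prod_symm _ hQ2m.aemeasurable,
      lintegral_prod _ hQ3m.aemeasurable,
      ← lintegral_const_mul' _ _ ENNReal.ofReal_ne_top]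
    refine lintegral_congr fun y => ?_
    by_cases h0 : 0 < y
    · set f : ℝ → ℝ≥0∞ := fun u => χ u * (G' ((u - δ * y) / a) * G' y) with hf_def
      have hfm : Measurable f :=
        hχm.mul ((measurable_G'.comp (by fun_prop)).mul measurable_const)
      have e2 : (fun x => Q2 (x, y)) = fun x => f (a * x + δ * y) := by
        ext x
        simp only [hQ2_def, h0, if_true, hf_def]
        rw [add_sub_cancel_right, mul_div_cancel_left₀ _ ha']
        ring
      have e3 : (fun u => Q3 (y, u)) = f := by
        ext u; simp only [hQ3_def, h0, if_true, hf_def]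
      rw [e2, e3, lintegral_affine ha' (δ * y) f hfm, abs_of_pos ha]
    · have e2 : (fun x => Q2 (x, y)) = fun _ => 0 := by
        ext x; simp [hQ2_def, h0]
      have e3 : (fun u => Q3 (y, u)) = fun _ => 0 := by
        ext u; simp [hQ3_def, h0]
      rw [e2, e3]
      simp
  have step3 : ∫⁻ p, Q3 p ∂(volume.prod volume)
      = ∫⁻ u in s, ENNReal.ofReal (a * stdNormalPDF u * stdNormalCDF (δ / a * u)) := by
    rw [lintegral_prod_symm _ hQ3m.aemeasurable, ← lintegral_indicator hs]
    refine lintegral_congr fun u => ?_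
    have hχtop : χ u ≠ ⊤ := by
      by_cases h : u ∈ s <;> simp [hχ_def, Set.indicator_apply, h]
    have e4 : (fun y => Q3 (y, u))
        = fun y => χ u * (Set.Ioi 0).indicator (fun y => G' ((u - δ * y) / a) * G' y) y := by
      ext y
      by_cases h0 : 0 < y
      · simp only [hQ3_def, h0, if_true, Set.indicator_apply, Set.mem_Ioi]
      · simp [hQ3_def, h0, Set.indicator_apply]
    rw [e4, lintegral_const_mul' _ _ hχtop, lintegral_indicator measurableSet_Ioi,
      key_integral' ha hab u]
    by_cases h : u ∈ s <;> simp [hχ_def, Set.indicator_apply, h]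
  rw [step0, step1, step2, step3, ← lintegral_const_mul' _ _ ENNReal.ofReal_ne_top,
    ← lintegral_const_mul' 2 _ (by norm_num)]
  refine setLIntegral_congr_fun hs (fun u _ => ?_)
  beta_reduce
  have h2 : (2 : ℝ≥0∞) = ENNReal.ofReal 2 := by norm_num
  rw [h2, ← ENNReal.ofReal_mul (inv_nonneg.2 ha.le),
    ← ENNReal.ofReal_mul (by norm_num : (0:ℝ) ≤ 2)]
  congr 1
  field_simp
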